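/- Let B be a complete Boolean algebra and δ a regular cardinal. Then B satisfies the δ-chain condition (every antichain of pairwise-incompatible nonzero elements has cardinality < δ) if and only if the induced realizability algebra A_B satisfies the δ-chain condition: there exists a realizer p with τ(p) = 1 such that for every δ-sequence of terms ⟨u_β : β < δ⟩, every term t and stack π, if τ(t) ∧ τ(u_γ) ∧ τ(u_β) ∧ τ(π) = 0 for all γ < β < δ, then there exists β < δ with τ(p) ∧ τ(t) ∧ τ(u_β) ∧ τ(π) = 0. -/

import Mathlib

namespace Kriv

/- λc-terms and stacks over a Boolean algebra `B`: there is a stack bottom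
`ω_b` for every `b ∈ B`, and no special instructions. -/
mutual
inductive BTm (B : Type) : Type where
  | var : ℕ → BTm B
  | app : BTm B → BTm B → BTm B
  | lam : ℕ → BTm B → BTm B
  | cc : BTm B
  | cont : BStack B → BTm B
inductive BStack (B : Type) : Type where
  | bottom : B → BStack B
  | cons : BTm B → BStack B → BStack B
end

variable {B : Type} [CompleteBooleanAlgebra B]

/- The valuation τ from terms and stacks to `B`. -/
mutual
def tauT : BTm B → B
  | .var _ => ⊤
  | .app t s => tauT t ⊓ tauT s
  | .lam _ t => tauT t
  | .cc => ⊤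
  | .cont π => tauS π
def tauS : BStack B → B
  | .bottom b => b
  | .cons t π => tauT t ⊓ tauS π
end

/-- `t` contains no continuation constant. -/
def NoCont : BTm B → Prop
  | .var _ => True
  | .app t s => NoCont t ∧ NoCont s
  | .lam _ t => NoCont t
  | .cc => True
  | .cont _ => False

/-- `t` is closed relative to the list `bv` of bound variables (continuation
constants hold closed stacks, so they are treated as closed). -/
def ClosedAux : List ℕ → BTm B → Prop
  | bv, .var x => x ∈ bv
  | bv, .app t s => ClosedAux bv t ∧ ClosedAux bv s
  | bv, .lam x t => ClosedAux (x :: bv) t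
  | _, .cc => True
  | _, .cont _ => True

/-- A realizer: a closed term with no continuation constant. -/
def IsRealizer (t : BTm B) : Prop := ClosedAux [] t ∧ NoCont t

private lemma inf4 {α : Type*} [Lattice α] (a b c d : α) :
    (a ⊓ b ⊓ d) ⊓ (a ⊓ c ⊓ d) ≤ a ⊓ b ⊓ c ⊓ d := by
  simp only [le_inf_iff]
  exact ⟨⟨⟨inf_le_left.trans (inf_le_left.trans inf_le_left),
    inf_le_left.trans (inf_le_left.trans inf_le_right)⟩,
    inf_le_right.trans (inf_le_left.trans inf_le_right)⟩,
    inf_le_left.trans inf_le_right⟩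

private lemma mk_index (δ : Cardinal.{0}) :
    (Cardinal.mk {β : Ordinal.{0} // β < δ.ord}) = Cardinal.lift.{1} δ := by
  have h := Cardinal.mk_Iio_ordinal δ.ord
  rw [Cardinal.card_ord] at h
  exact h

/-- a complete Boolean algebra `B` satisfies the δ-chain
condition (every set of pairwise-incompatible nonzero elements has cardinality
`< δ`) iff the induced realizability algebra `A_B` (whose pole is
`{t ⋆ π : τ(t) ⊓ τ(π) = ⊥}`) satisfies the δ-chain condition: there is a
realizer `p` with `τ(p) = ⊤` such that for every δ-sequence of terms
`⟨u_β : β < δ⟩`, every term `t` and stack `π`, if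
`τ(t) ⊓ τ(u_γ) ⊓ τ(u_β) ⊓ τ(π) = ⊥` for all `γ < β < δ`, then there is
`β < δ` with `τ(p) ⊓ τ(t) ⊓ τ(u_β) ⊓ τ(π) = ⊥`. -/
theorem boolean_cc_iff_algebra_cc (B : Type) [CompleteBooleanAlgebra B]
    (δ : Cardinal.{0}) (hδ : δ.IsRegular) :
    (∀ A : Set B, (∀ a ∈ A, a ≠ ⊥) →
        (∀ a ∈ A, ∀ b ∈ A, a ≠ b → a ⊓ b = ⊥) → Cardinal.mk A < δ) ↔
      ∃ p : BTm B, IsRealizer p ∧ tauT p = ⊤ ∧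
        ∀ (u : {β : Ordinal.{0} // β < δ.ord} → BTm B) (t : BTm B)
          (π : BStack B),
          (∀ γ β, γ < β → tauT t ⊓ tauT (u γ) ⊓ tauT (u β) ⊓ tauS π = ⊥) →
          ∃ β, tauT p ⊓ tauT t ⊓ tauT (u β) ⊓ tauS π = ⊥ := by
  constructor
  · intro hcc
    refine ⟨.lam 0 (.var 0), ⟨by simp [ClosedAux], by simp [NoCont]⟩, by simp [tauT], ?_⟩
    intro u t π hpair
    by_contra hne
    push_neg at hne
    simp only [tauT, top_inf_eq] at hne
    set g : {β : Ordinal.{0} // β < δ.ord} → B :=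
      fun β => tauT t ⊓ tauT (u β) ⊓ tauS π with hg
    have hbot : ∀ γ β, γ ≠ β → g γ ⊓ g β = ⊥ := by
      intro γ β hne'
      rcases lt_trichotomy γ β with h | h | h
      · exact le_bot_iff.mp
          ((inf4 (tauT t) (tauT (u γ)) (tauT (u β)) (tauS π)).trans_eq (hpair γ β h))
      · exact absurd h hne'
      · rw [inf_comm]
        exact le_bot_iff.mp
          ((inf4 (tauT t) (tauT (u β)) (tauT (u γ)) (tauS π)).trans_eq (hpair β γ h))
    have hginj : Function.Injective g := by
      intro γ β h
      by_contra hne'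
      have := hbot γ β hne'
      rw [h, inf_idem] at this
      exact hne β this
    have hA := hcc (Set.range g) (by rintro a ⟨β, rfl⟩; exact hne β)
      (by rintro a ⟨γ, rfl⟩ b ⟨β, rfl⟩ hab; exact hbot γ β (fun h => hab (by rw [h])))
    have h1 := Cardinal.mk_range_eq_of_injective hginj
    rw [mk_index δ, Cardinal.lift_id'] at h1
    have : Cardinal.mk (Set.range g) = δ := Cardinal.lift_inj.mp h1
    rw [this] at hA
    exact absurd hA (lt_irrefl δ)
  · rintro ⟨p, _, hptop, hcc⟩ A hnz hpair
    by_contra hlt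
    push_neg at hlt
    have hemb : Nonempty ({β : Ordinal.{0} // β < δ.ord} ↪ A) := by
      apply Cardinal.lift_mk_le'.mp
      rw [Cardinal.lift_id', mk_index δ]
      exact Cardinal.lift_le.mpr hlt
    obtain ⟨f⟩ := hemb
    obtain ⟨β, hβ⟩ := hcc (fun β => .cont (.bottom (f β : B))) .cc (.bottom ⊤) (by
      intro γ β h
      simp only [tauT, tauS, top_inf_eq, inf_top_eq]
      refine hpair _ (f γ).2 _ (f β).2 (fun hh => ?_)
      exact absurd (f.injective (Subtype.ext hh)) (ne_of_lt h))
    simp only [tauT, tauS, hptop, top_inf_eq, inf_top_eq] at hβ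
    exact hnz _ (f β).2 hβ

end Kriv
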